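/- With ψ(Z) = U_{σ_Z(n+1)} the streaming assignment map (assigning to each query Z the target matched to it in an optimal augmented assignment), for any two points Z, Z' ∈ ℝ^d one has ⟨Z - Z', ψ(Z) - ψ(Z')⟩ ≥ 0; that is, ψ is a monotone map. -/

import Mathlib

open Finset

/-- **Monotonicity of the streaming assignment map.** If `σz` and `σz'` optimally solve the
augmented assignment problems for queries `z` and `z'` respectively, and
`ψ(z) = U (σz (n+1))`, then `⟨z - z', ψ(z) - ψ(z')⟩ ≥ 0`. -/
theorem stmt_9 {d n : ℕ}
    (Z : Fin n → EuclideanSpace ℝ (Fin d)) (U : Fin (n + 1) → EuclideanSpace ℝ (Fin d))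
    (z z' : EuclideanSpace ℝ (Fin d))
    (σz σz' : Equiv.Perm (Fin (n + 1)))
    (hz : ∀ π : Equiv.Perm (Fin (n + 1)),
      (∑ i : Fin n, ‖Z i - U (σz i.castSucc)‖ ^ 2) + ‖z - U (σz (Fin.last n))‖ ^ 2
        ≤ (∑ i : Fin n, ‖Z i - U (π i.castSucc)‖ ^ 2) + ‖z - U (π (Fin.last n))‖ ^ 2)
    (hz' : ∀ π : Equiv.Perm (Fin (n + 1)),
      (∑ i : Fin n, ‖Z i - U (σz' i.castSucc)‖ ^ 2) + ‖z' - U (σz' (Fin.last n))‖ ^ 2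
        ≤ (∑ i : Fin n, ‖Z i - U (π i.castSucc)‖ ^ 2) + ‖z' - U (π (Fin.last n))‖ ^ 2) :
    0 ≤ (inner ℝ (z - z') (U (σz (Fin.last n)) - U (σz' (Fin.last n))) : ℝ) := by
  have h1 := hz σz'
  have h2 := hz' σz
  set a := U (σz (Fin.last n))
  set b := U (σz' (Fin.last n))
  have key : ‖z - a‖ ^ 2 + ‖z' - b‖ ^ 2 ≤ ‖z - b‖ ^ 2 + ‖z' - a‖ ^ 2 := by linarith
  have ea : ‖z - a‖ ^ 2 = ‖z‖ ^ 2 - 2 * inner ℝ z a + ‖a‖ ^ 2 := norm_sub_sq_real z a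
  have eb : ‖z - b‖ ^ 2 = ‖z‖ ^ 2 - 2 * inner ℝ z b + ‖b‖ ^ 2 := norm_sub_sq_real z b
  have ea' : ‖z' - a‖ ^ 2 = ‖z'‖ ^ 2 - 2 * inner ℝ z' a + ‖a‖ ^ 2 := norm_sub_sq_real z' a
  have eb' : ‖z' - b‖ ^ 2 = ‖z'‖ ^ 2 - 2 * inner ℝ z' b + ‖b‖ ^ 2 := norm_sub_sq_real z' b
  have expand : (inner ℝ (z - z') (a - b) : ℝ)
      = inner ℝ z a - inner ℝ z b - inner ℝ z' a + inner ℝ z' b := by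
    simp [inner_sub_left, inner_sub_right]; ring
  rw [expand]
  rw [ea, eb] at key
  rw [ea', eb'] at key
  linarith
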